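/- arXiv:2101.06627 — 2 statements merged into one kernel-verified Lean document; each statement's English description precedes it below -/
import Mathlib

section
/- Let λ > 0, ν > 0 and Δt > 0. On a probability space, let N be a random variable with the Poisson distribution of parameter λΔt, and let (U_i)_{i≥1} be a sequence of i.i.d. random variables uniformly distributed on [0, Δt], independent of N. Define the random variable C by C = 1 + νΔt if N = 0, and C = 1 + νΔt + 2N + ν(NΔt − Σ_{i=1}^{N} U_i + max_{1≤i≤N} U_i) if N ≥ 1. Then E[C] = 1 + νΔt + (2λ + ν)Δt + (λν/2)Δt² + (ν/λ)(e^{−λΔt} − 1). -/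
open MeasureTheory ProbabilityTheory

open scoped ENNReal NNReal



section Helpers

variable {Ω : Type*} [MeasurableSpace Ω] {P : Measure Ω} {Δt : ℝ} {X : Ω → ℝ}

lemma vol_ne_zero (hΔt : 0 < Δt) : (volume (Set.Icc (0:ℝ) Δt)) ≠ 0 := by
  simp [Real.volume_Icc, hΔt.le, ENNReal.ofReal_eq_zero, not_le, hΔt]

lemma vol_ne_top : (volume (Set.Icc (0:ℝ) Δt)) ≠ ⊤ := by
  simp [Real.volume_Icc]

lemma unif_ae_mem (hΔt : 0 < Δt) (hX : pdf.IsUniform X (Set.Icc 0 Δt) P volume) :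
    ∀ᵐ ω ∂P, X ω ∈ Set.Icc (0:ℝ) Δt := by
  have h := hX.measure_preimage (vol_ne_zero hΔt) vol_ne_top
    (A := (Set.Icc (0:ℝ) Δt)ᶜ) measurableSet_Icc.compl
  rw [Set.inter_compl_self] at h
  simp only [measure_empty, ENNReal.zero_div] at h
  rw [ae_iff]
  exact h

open intervalIntegral in
lemma unif_integral (hΔt : 0 < Δt) (hX : pdf.IsUniform X (Set.Icc 0 Δt) P volume) :
    ∫ ω, X ω ∂P = Δt / 2 := by
  rw [hX.integral_eq]
  rw [Real.volume_Icc, show Δt - 0 = Δt by ring]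
  rw [MeasureTheory.integral_Icc_eq_integral_Ioc,
    ← integral_of_le hΔt.le]
  simp [integral_id, ENNReal.toReal_inv, ENNReal.toReal_ofReal hΔt.le]
  field_simp

lemma unif_cdf (hΔt : 0 < Δt) (hX : pdf.IsUniform X (Set.Icc 0 Δt) P volume)
    {t : ℝ} (ht : t ∈ Set.Ioc 0 Δt) :
    P (X ⁻¹' Set.Iio t) = ENNReal.ofReal (t / Δt) := by
  have h := hX.measure_preimage (vol_ne_zero hΔt) vol_ne_top
    (A := Set.Iio t) measurableSet_Iio
  rw [h]
  have : Set.Icc (0:ℝ) Δt ∩ Set.Iio t = Set.Ico 0 t := by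
    ext x
    simp only [Set.mem_inter_iff, Set.mem_Icc, Set.mem_Iio, Set.mem_Ico]
    constructor
    · rintro ⟨⟨h1, h2⟩, h3⟩; exact ⟨h1, h3⟩
    · rintro ⟨h1, h2⟩; exact ⟨⟨h1, h2.le.trans ht.2⟩, h2⟩
  rw [this, Real.volume_Ico, Real.volume_Icc, show t - 0 = t by ring, show Δt - 0 = Δt by ring,
    ← ENNReal.ofReal_div_of_pos hΔt]

lemma aemeasurable_sup' {ι : Type*} {s : Finset ι} (hs : s.Nonempty) {f : ι → Ω → ℝ}
    (hf : ∀ i ∈ s, AEMeasurable (f i) P) :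
    AEMeasurable (fun ω => s.sup' hs fun i => f i ω) P := by
  induction hs using Finset.Nonempty.cons_induction with
  | singleton a => simpa using hf a (by simp)
  | cons a s ha hs ih =>
    have h1 : (fun ω => (Finset.cons a s ha).sup' (Finset.cons_nonempty ha) fun i => f i ω)
        = fun ω => f a ω ⊔ s.sup' hs fun i => f i ω := by
      funext ω
      exact @Finset.sup'_cons ℝ ι _ s hs (fun i => f i ω) a ha
    rw [h1]
    exact (hf a (by simp)).sup'
      (ih fun i hi => hf i (Finset.mem_cons_of_mem hi))

open intervalIntegral in
lemma Emax [IsProbabilityMeasure P] (hΔt : 0 < Δt) {U : ℕ → Ω → ℝ}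
    (hunif : ∀ i, pdf.IsUniform (U i) (Set.Icc 0 Δt) P volume)
    (hiid : iIndepFun U P) {n : ℕ} (hn : n ≠ 0)
    (hne : (Finset.Icc 1 n).Nonempty) :
    ∫ ω, (Finset.Icc 1 n).sup' hne (fun i => U i ω) ∂P = Δt - Δt / (n + 1) := by
  set M : Ω → ℝ := fun ω => (Finset.Icc 1 n).sup' hne (fun i => U i ω) with hM
  have haem : AEMeasurable M P :=
    aemeasurable_sup' hne fun i _ => (hunif i).aemeasurable (vol_ne_zero hΔt) vol_ne_top
  have hmemall : ∀ᵐ ω ∂P, ∀ i, U i ω ∈ Set.Icc (0:ℝ) Δt :=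
    ae_all_iff.2 fun i => unif_ae_mem hΔt (hunif i)
  have h1mem : (1 : ℕ) ∈ Finset.Icc 1 n :=
    Finset.mem_Icc.mpr ⟨le_refl 1, Nat.one_le_iff_ne_zero.mpr hn⟩
  have hnn : ∀ᵐ ω ∂P, 0 ≤ M ω := by
    filter_upwards [hmemall] with ω hω
    exact Finset.le_sup'_of_le _ h1mem (hω 1).1
  have hbdd : ∀ᵐ ω ∂P, M ω ≤ Δt := by
    filter_upwards [hmemall] with ω hω
    exact Finset.sup'_le _ _ fun i _ => (hω i).2
  have hint : Integrable M P := by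
    refine (integrable_const Δt).mono' haem.aestronglyMeasurable ?_
    filter_upwards [hnn, hbdd] with ω h1 h2
    rw [Real.norm_eq_abs, abs_le]
    constructor <;> linarith
  have key := hint.integral_eq_integral_Ioc_meas_le hnn hbdd
  rw [key]
  have hcongr : ∀ t ∈ Set.Ioc (0:ℝ) Δt,
      (P {a | t ≤ M a}).toReal = 1 - (t / Δt) ^ n := by
    intro t ht
    have hset : {a | t ≤ M a} = (⋂ i ∈ Finset.Icc 1 n, U i ⁻¹' Set.Iio t)ᶜ := by
      ext a
      simp only [Set.mem_setOf_eq, Set.mem_compl_iff, Set.mem_iInter, Set.mem_preimage,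
        Set.mem_Iio, not_forall, not_lt]
      rw [← not_lt, Finset.sup'_lt_iff]
      push_neg
      tauto
    have hnull : NullMeasurableSet (⋂ i ∈ Finset.Icc 1 n, U i ⁻¹' Set.Iio t) P := by
      refine NullMeasurableSet.biInter (Finset.countable_toSet _) fun i _ => ?_
      exact (((hunif i).aemeasurable (vol_ne_zero hΔt) vol_ne_top).nullMeasurable)
        measurableSet_Iio
    have hprod : P (⋂ i ∈ Finset.Icc 1 n, U i ⁻¹' Set.Iio t)
        = ENNReal.ofReal ((t / Δt) ^ n) := by
      rw [hiid.meas_biInter fun i _ => ⟨Set.Iio t, measurableSet_Iio, rfl⟩]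
      rw [Finset.prod_congr rfl fun i _ => unif_cdf hΔt (hunif i) ht, Finset.prod_const,
        Nat.card_Icc, ENNReal.ofReal_pow (div_nonneg ht.1.le hΔt.le)]
      norm_num
    have hle : ENNReal.ofReal ((t / Δt) ^ n) ≤ 1 := by
      rw [show (1 : ℝ≥0∞) = ENNReal.ofReal 1 by simp]
      exact ENNReal.ofReal_le_ofReal
        (pow_le_one₀ (div_nonneg ht.1.le hΔt.le) (div_le_one_of_le₀ ht.2 hΔt.le))
    rw [hset, measure_compl₀ hnull (measure_ne_top P _), measure_univ, hprod,
      ENNReal.toReal_sub_of_le hle ENNReal.one_ne_top, ENNReal.toReal_one,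
      ENNReal.toReal_ofReal (pow_nonneg (div_nonneg ht.1.le hΔt.le) n)]
  rw [setIntegral_congr_fun measurableSet_Ioc (show Set.EqOn (fun t => P.real {a | t ≤ M a}) (fun t => 1 - (t / Δt) ^ n) (Set.Ioc 0 Δt) from hcongr), ← integral_of_le hΔt.le]
  have hp : (fun t : ℝ => 1 - (t / Δt) ^ n) = fun t : ℝ => 1 - t ^ n / Δt ^ n := by
    funext t; rw [div_pow]
  rw [hp, integral_sub intervalIntegrable_const ((intervalIntegrable_pow n).div_const _),
    intervalIntegral.integral_div, integral_pow, intervalIntegral.integral_const]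
  have hn1 : (n : ℝ) + 1 ≠ 0 := by positivity
  field_simp
  ring

lemma poisson_hasSum_id (r : ℝ≥0) :
    HasSum (fun n : ℕ => (n : ℝ) * poissonPMFReal r n) (r : ℝ) := by
  have h : ∀ m : ℕ, ((m + 1 : ℕ) : ℝ) * poissonPMFReal r (m + 1)
      = (r : ℝ) * poissonPMFReal r m := by
    intro m
    unfold poissonPMFReal
    rw [Nat.factorial_succ]
    have h1 : ((m + 1 : ℕ) : ℝ) ≠ 0 := by positivity
    have h2 : ((m:ℕ).factorial : ℝ) ≠ 0 := by positivity
    push_cast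
    field_simp
    ring
  have h2 : HasSum (fun m : ℕ => ((fun n : ℕ => (n : ℝ) * poissonPMFReal r n) (m + 1)))
      (r : ℝ) := by
    have h3 := (poissonPMFRealSum r).mul_left (r : ℝ)
    rw [mul_one] at h3
    exact (funext h : _ = _) ▸ h3
  have h4 := (hasSum_nat_add_iff (f := fun n : ℕ => (n : ℝ) * poissonPMFReal r n) 1).mp h2
  simpa using h4

lemma poisson_hasSum_inv_succ (r : ℝ≥0) (hr : 0 < (r : ℝ)) :
    HasSum (fun n : ℕ => poissonPMFReal r n / ((n : ℝ) + 1))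
      ((1 - Real.exp (-(r : ℝ))) / (r : ℝ)) := by
  have h : ∀ n : ℕ, poissonPMFReal r (n + 1) / (r : ℝ)
      = poissonPMFReal r n / ((n : ℝ) + 1) := by
    intro n
    unfold poissonPMFReal
    rw [Nat.factorial_succ]
    have h1 : ((n : ℝ) + 1) ≠ 0 := by positivity
    have h2 : ((n:ℕ).factorial : ℝ) ≠ 0 := by positivity
    have h3 : (r : ℝ) ≠ 0 := hr.ne'
    push_cast
    field_simp
    ring
  have h2 : HasSum (fun n : ℕ => poissonPMFReal r (n + 1)) (1 - poissonPMFReal r 0) := by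
    refine (hasSum_nat_add_iff 1).mpr ?_
    rw [Finset.sum_range_one, sub_add_cancel]
    exact poissonPMFRealSum r
  have h3 := h2.div_const (r : ℝ)
  have h4 : poissonPMFReal r 0 = Real.exp (-(r : ℝ)) := by
    unfold poissonPMFReal; simp
  rw [h4] at h3
  exact (funext h : _ = _) ▸ h3

end Helpers

/-- The per-`n` cost function. -/
noncomputable def Faux (ν Δt : ℝ) (n : ℕ) (u : ℕ → ℝ) : ℝ :=
  if hn : n = 0 then 1 + ν * Δt
  else 1 + ν * Δt + 2 * (n : ℝ)
    + ν * ((n : ℝ) * Δt - (∑ i ∈ Finset.Icc 1 n, u i)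
        + (Finset.Icc 1 n).sup'
            (Finset.nonempty_Icc.mpr (Nat.one_le_iff_ne_zero.mpr hn)) u)

/-- Expected per-`n` cost. -/
noncomputable def gaux (ν Δt : ℝ) (n : ℕ) : ℝ :=
  1 + ν * Δt + 2 * (n : ℝ)
    + ν * ((n : ℝ) * Δt - (n : ℝ) * (Δt / 2) + (Δt - Δt / ((n : ℝ) + 1)))

lemma Faux_meas (ν Δt : ℝ) (n : ℕ) : Measurable (Faux ν Δt n) := by
  unfold Faux
  by_cases h : n = 0
  · simp only [h, dif_pos]
    exact measurable_const
  · simp only [h, dif_neg, not_false_iff]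
    have hne : (Finset.Icc 1 n).Nonempty :=
      Finset.nonempty_Icc.mpr (Nat.one_le_iff_ne_zero.mpr h)
    have hsum : Measurable fun u : ℕ → ℝ => ∑ i ∈ Finset.Icc 1 n, u i :=
      Finset.measurable_sum _ fun i _ => measurable_pi_apply i
    have hsup : Measurable fun u : ℕ → ℝ => (Finset.Icc 1 n).sup' hne u := by
      have h2 : (fun u : ℕ → ℝ => (Finset.Icc 1 n).sup' hne u)
          = (Finset.Icc 1 n).sup' hne (fun i => (fun u : ℕ → ℝ => u i)) := by
        funext u
        rw [Finset.sup'_apply]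
      rw [h2]
      exact Finset.measurable_sup' hne fun i _ => measurable_pi_apply i
    exact measurable_const.add
      (((measurable_const.sub hsum).add hsup).const_mul ν)

lemma Faux_nonneg_bound {ν Δt : ℝ} (hν : 0 < ν) (hΔt : 0 < Δt) (n : ℕ) (u : ℕ → ℝ)
    (hu : ∀ i, u i ∈ Set.Icc (0:ℝ) Δt) :
    ‖Faux ν Δt n u‖ ≤ 1 + ν * Δt + 2 * (n : ℝ) + ν * ((n : ℝ) * Δt + Δt) := by
  have hνΔt : 0 ≤ ν * Δt := le_of_lt (mul_pos hν hΔt)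
  rw [Real.norm_eq_abs, abs_le]
  by_cases h : n = 0
  · subst h
    unfold Faux
    simp only [dif_pos]
    push_cast
    constructor <;> nlinarith
  · have hne : (Finset.Icc 1 n).Nonempty :=
      Finset.nonempty_Icc.mpr (Nat.one_le_iff_ne_zero.mpr h)
    have h1mem : (1 : ℕ) ∈ Finset.Icc 1 n :=
      Finset.mem_Icc.mpr ⟨le_refl 1, Nat.one_le_iff_ne_zero.mpr h⟩
    have hS1 : 0 ≤ ∑ i ∈ Finset.Icc 1 n, u i :=
      Finset.sum_nonneg fun i _ => (hu i).1
    have hS2 : ∑ i ∈ Finset.Icc 1 n, u i ≤ (n : ℝ) * Δt := by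
      calc ∑ i ∈ Finset.Icc 1 n, u i ≤ ∑ _i ∈ Finset.Icc 1 n, Δt :=
            Finset.sum_le_sum fun i _ => (hu i).2
        _ = (n : ℝ) * Δt := by
            rw [Finset.sum_const, Nat.card_Icc, nsmul_eq_mul]
            push_cast
            ring
    have hM1 : 0 ≤ (Finset.Icc 1 n).sup' hne u :=
      Finset.le_sup'_of_le _ h1mem (hu 1).1
    have hM2 : (Finset.Icc 1 n).sup' hne u ≤ Δt :=
      Finset.sup'_le _ _ fun i _ => (hu i).2
    unfold Faux
    rw [dif_neg h]
    have hn0 : (0:ℝ) ≤ (n : ℝ) := Nat.cast_nonneg n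
    set S := ∑ i ∈ Finset.Icc 1 n, u i
    set M := (Finset.Icc 1 n).sup' hne u
    have key1 : 0 ≤ ν * ((n : ℝ) * Δt - S + M) := by
      apply mul_nonneg hν.le; linarith
    have key2 : ν * ((n : ℝ) * Δt - S + M) ≤ ν * ((n : ℝ) * Δt + Δt) := by
      apply mul_le_mul_of_nonneg_left _ hν.le; linarith
    constructor <;> nlinarith

lemma Faux_integral {Ω : Type*} [MeasurableSpace Ω] {P : Measure Ω} [IsProbabilityMeasure P]
    {ν Δt : ℝ} (hν : 0 < ν) (hΔt : 0 < Δt) {U : ℕ → Ω → ℝ}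
    (hunif : ∀ i, pdf.IsUniform (U i) (Set.Icc 0 Δt) P volume)
    (hiid : iIndepFun U P) (n : ℕ) :
    ∫ ω, Faux ν Δt n (fun i => U i ω) ∂P = gaux ν Δt n := by
  have hmemall : ∀ᵐ ω ∂P, ∀ i, U i ω ∈ Set.Icc (0:ℝ) Δt :=
    ae_all_iff.2 fun i => unif_ae_mem hΔt (hunif i)
  have hUae : ∀ i, AEMeasurable (U i) P :=
    fun i => (hunif i).aemeasurable (vol_ne_zero hΔt) vol_ne_top
  have hUint : ∀ i, Integrable (U i) P := by
    intro i
    refine (integrable_const Δt).mono' (hUae i).aestronglyMeasurable ?_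
    filter_upwards [hmemall] with ω hω
    rw [Real.norm_eq_abs, abs_le]
    exact ⟨by linarith [(hω i).1], (hω i).2⟩
  by_cases h : n = 0
  · subst h
    unfold Faux gaux
    simp only [dif_pos]
    rw [integral_const, probReal_univ]
    push_cast
    norm_num
  · have hne : (Finset.Icc 1 n).Nonempty :=
      Finset.nonempty_Icc.mpr (Nat.one_le_iff_ne_zero.mpr h)
    have hMint : Integrable (fun ω => (Finset.Icc 1 n).sup' hne fun i => U i ω) P := by
      refine (integrable_const Δt).mono'
        (aemeasurable_sup' hne fun i _ => hUae i).aestronglyMeasurable ?_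
      filter_upwards [hmemall] with ω hω
      rw [Real.norm_eq_abs, abs_le]
      have h1mem : (1 : ℕ) ∈ Finset.Icc 1 n :=
        Finset.mem_Icc.mpr ⟨le_refl 1, Nat.one_le_iff_ne_zero.mpr h⟩
      constructor
      · have := Finset.le_sup'_of_le (fun i => U i ω) h1mem (hω 1).1
        linarith
      · exact Finset.sup'_le _ _ fun i _ => (hω i).2
    have hSint : Integrable (fun ω => ∑ i ∈ Finset.Icc 1 n, U i ω) P :=
      integrable_finset_sum _ fun i _ => hUint i
    have hfeq : (fun ω => Faux ν Δt n (fun i => U i ω))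
        = fun ω => (1 + ν * Δt + 2 * (n : ℝ) + ν * ((n : ℝ) * Δt))
          + (ν * ((Finset.Icc 1 n).sup' hne fun i => U i ω)
            - ν * (∑ i ∈ Finset.Icc 1 n, U i ω)) := by
      funext ω
      unfold Faux
      rw [dif_neg h]
      ring
    have hsub : Integrable (fun ω => ν * ((Finset.Icc 1 n).sup' hne fun i => U i ω)
        - ν * ∑ i ∈ Finset.Icc 1 n, U i ω) P :=
      (hMint.const_mul ν).sub (hSint.const_mul ν)
    rw [hfeq, integral_add (integrable_const _) hsub,
      integral_const, probReal_univ,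
      integral_sub (hMint.const_mul ν) (hSint.const_mul ν),
      integral_const_mul, integral_const_mul,
      Emax hΔt hunif hiid h hne,
      integral_finset_sum _ fun i _ => hUint i]
    have hsum : ∑ i ∈ Finset.Icc 1 n, ∫ ω, U i ω ∂P = (n : ℝ) * (Δt / 2) := by
      rw [Finset.sum_congr rfl fun i _ => unif_integral hΔt (hunif i), Finset.sum_const,
        Nat.card_Icc, nsmul_eq_mul]
      push_cast
      ring
    rw [hsum]
    unfold gaux
    simp only [ENNReal.toReal_one, one_smul]
    ring

/-- Theorem 1 of the paper (exact form): on a probability space, let `N` be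
Poisson with parameter `λΔt` and `(U_i)_{i≥1}` i.i.d. uniform on `[0, Δt]`,
independent of `N`.  With
`C = 1 + νΔt` on `{N = 0}` and
`C = 1 + νΔt + 2N + ν(NΔt − Σ_{i=1}^N U_i + max_{1≤i≤N} U_i)` on `{N ≥ 1}`,
one has
`E[C] = 1 + νΔt + (2λ + ν)Δt + (λν/2)Δt² + (ν/λ)(e^{−λΔt} − 1)` —
the expected call number of the standard RK4 scheme for one neuron over one
time step in the regular method. -/
theorem stmt_0 (lam ν Δt : ℝ) (hlam : 0 < lam) (hν : 0 < ν) (hΔt : 0 < Δt)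
    {Ω : Type*} [MeasurableSpace Ω] (P : Measure Ω) [IsProbabilityMeasure P]
    (N : Ω → ℕ) (hN : Measure.map N P = ProbabilityTheory.poissonMeasure ((lam * Δt).toNNReal))
    (U : ℕ → Ω → ℝ)
    (hunif : ∀ i, MeasureTheory.pdf.IsUniform (U i) (Set.Icc (0:ℝ) Δt) P volume)
    (hiid : ProbabilityTheory.iIndepFun U P)
    (hindep : ProbabilityTheory.IndepFun N (fun ω => fun i => U i ω) P)
    (C : Ω → ℝ)
    (hC : C = fun ω =>
      if hω : N ω = 0 then 1 + ν * Δt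
      else 1 + ν * Δt + 2 * (N ω : ℝ)
        + ν * ((N ω : ℝ) * Δt - (∑ i ∈ Finset.Icc 1 (N ω), U i ω)
            + (Finset.Icc 1 (N ω)).sup'
                (Finset.nonempty_Icc.mpr (Nat.one_le_iff_ne_zero.mpr hω))
                (fun i => U i ω))) :
    ∫ ω, C ω ∂P
      = 1 + ν * Δt + (2 * lam + ν) * Δt + (lam * ν / 2) * Δt ^ 2
        + (ν / lam) * (Real.exp (-(lam * Δt)) - 1) := by
  have hμ : 0 < lam * Δt := mul_pos hlam hΔt
  set r : ℝ≥0 := (lam * Δt).toNNReal with hrdef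
  have hrr : (r : ℝ) = lam * Δt := Real.coe_toNNReal _ hμ.le
  have hrpos : 0 < (r : ℝ) := by rw [hrr]; exact hμ
  set p : ℕ → ℝ := fun n => poissonPMFReal r n with hpdef
  have hpn : ∀ n, 0 ≤ p n := fun n => poissonPMFReal_nonneg
  -- measurability of N
  have hNae : AEMeasurable N P := by
    by_contra h
    rw [Measure.map_of_not_aemeasurable h] at hN
    have h2 := congrArg (fun m : Measure ℕ => m Set.univ) hN
    simp [measure_univ] at h2
  have hpois : ∀ n, poissonMeasure r {n} = ENNReal.ofReal (p n) := by
    intro n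
    rw [poissonMeasure_singleton]
    rfl
  have hPn : ∀ n, P (N ⁻¹' {n}) = ENNReal.ofReal (p n) := by
    intro n
    rw [← Measure.map_apply_of_aemeasurable hNae (measurableSet_singleton n), hN]
    exact hpois n
  -- the U-vector
  have hUae : ∀ i, AEMeasurable (U i) P :=
    fun i => (hunif i).aemeasurable (vol_ne_zero hΔt) vol_ne_top
  have hVae : AEMeasurable (fun ω => fun i => U i ω) P := by
    refine ⟨fun ω i => (hUae i).mk (U i) ω,
      measurable_pi_iff.mpr fun i => (hUae i).measurable_mk, ?_⟩
    have hall : ∀ᵐ ω ∂P, ∀ i, U i ω = (hUae i).mk (U i) ω :=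
      ae_all_iff.2 fun i => (hUae i).ae_eq_mk
    filter_upwards [hall] with ω hω
    funext i
    exact hω i
  have hmemall : ∀ᵐ ω ∂P, ∀ i, U i ω ∈ Set.Icc (0:ℝ) Δt :=
    ae_all_iff.2 fun i => unif_ae_mem hΔt (hunif i)
  -- rewrite C via Faux
  have hCF : ∀ ω, C ω = Faux ν Δt (N ω) (fun i => U i ω) := by
    intro ω
    rw [hC]
    by_cases h : N ω = 0
    · simp only [h, Faux, dif_pos]
    · simp only [Faux, h, dif_neg, not_false_iff]
  -- the summands
  set f : ℕ → Ω → ℝ :=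
    fun n ω => (if N ω = n then (1:ℝ) else 0) * Faux ν Δt n (fun i => U i ω) with hfdef
  have hptw : ∀ ω, C ω = ∑' n, f n ω := by
    intro ω
    rw [hCF ω]
    rw [tsum_eq_single (N ω) (fun m hm => by simp [hfdef, Ne.symm hm])]
    simp [hfdef]
  have hfae : ∀ n, AEStronglyMeasurable (f n) P := by
    intro n
    exact ((((measurable_from_nat (f := fun k : ℕ => if k = n then (1:ℝ) else 0))).comp_aemeasurable
        hNae).mul
      ((Faux_meas ν Δt n).comp_aemeasurable hVae)).aestronglyMeasurable
  -- the bound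
  set B : ℕ → ℝ := fun n => 1 + ν * Δt + 2 * (n : ℝ) + ν * ((n : ℝ) * Δt + Δt) with hBdef
  have hBnn : ∀ n, 0 ≤ B n := by
    intro n
    have h0 : (0:ℝ) ≤ (n:ℝ) := Nat.cast_nonneg n
    have h1 : 0 ≤ ν * Δt := le_of_lt (mul_pos hν hΔt)
    have h2 : 0 ≤ (n:ℝ) * Δt := mul_nonneg h0 hΔt.le
    have h3 : 0 ≤ ν * ((n:ℝ) * Δt + Δt) := mul_nonneg hν.le (by linarith)
    simp only [hBdef]
    linarith
  have hlin : ∀ n, ∫⁻ ω, ‖f n ω‖₊ ∂P ≤ ENNReal.ofReal (B n * p n) := by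
    intro n
    have hae2 : ∀ᵐ ω ∂P, (‖f n ω‖₊ : ℝ≥0∞)
        ≤ ((fun k : ℕ => if k = n then ENNReal.ofReal (B n) else 0) ∘ N) ω := by
      filter_upwards [hmemall] with ω hω
      by_cases h : N ω = n
      · simp only [Function.comp_apply, h, if_pos]
        rw [← enorm_eq_nnnorm, ← ofReal_norm]
        apply ENNReal.ofReal_le_ofReal
        have hb := Faux_nonneg_bound hν hΔt n (fun i => U i ω) hω
        calc ‖f n ω‖ = ‖Faux ν Δt n (fun i => U i ω)‖ := by simp [hfdef, h]
          _ ≤ B n := hb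
      · simp [hfdef, h]
    calc ∫⁻ ω, ‖f n ω‖₊ ∂P
        ≤ ∫⁻ ω, ((fun k : ℕ => if k = n then ENNReal.ofReal (B n) else 0) ∘ N) ω ∂P :=
          lintegral_mono_ae hae2
      _ = ∫⁻ k, (if k = n then ENNReal.ofReal (B n) else 0) ∂(Measure.map N P) :=
          (lintegral_map' (f := fun k : ℕ => if k = n then ENNReal.ofReal (B n) else 0)
            measurable_from_nat.aemeasurable hNae).symm
      _ = ∫⁻ k, Set.indicator {n} (fun _ => ENNReal.ofReal (B n)) k ∂(poissonMeasure r) := by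
          rw [hN]
          refine lintegral_congr fun k => ?_
          simp [Set.indicator_apply]
      _ = ENNReal.ofReal (B n) * poissonMeasure r {n} :=
          lintegral_indicator_const (measurableSet_singleton n) _
      _ = ENNReal.ofReal (B n) * ENNReal.ofReal (p n) := by rw [hpois n]
      _ = ENNReal.ofReal (B n * p n) := (ENNReal.ofReal_mul (hBnn n)).symm
  have hsummB : Summable (fun n => B n * p n) := by
    have h1 := ((poissonPMFRealSum r).summable.mul_left (1 + 2 * (ν * Δt))).add
      ((poisson_hasSum_id r).summable.mul_left (2 + ν * Δt))
    refine h1.congr fun n => ?_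
    simp only [hBdef, hpdef, poissonPMFReal]
    ring
  have htop : (∑' n, ∫⁻ ω, ‖f n ω‖₊ ∂P) ≠ ⊤ := by
    refine ne_top_of_le_ne_top ?_ (ENNReal.tsum_le_tsum hlin)
    rw [← ENNReal.ofReal_tsum_of_nonneg (fun n => mul_nonneg (hBnn n) (hpn n)) hsummB]
    exact ENNReal.ofReal_ne_top
  -- evaluate each summand
  have hphi : ∀ n : ℕ, ∫ ω, (if N ω = n then (1:ℝ) else 0) ∂P = p n := by
    intro n
    have h3 := integral_map (φ := N) hNae
      (f := fun k : ℕ => if k = n then (1:ℝ) else 0)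
      measurable_from_nat.aestronglyMeasurable
    rw [← h3, hN]
    have h2 : (fun k : ℕ => if k = n then (1:ℝ) else 0)
        = Set.indicator {n} (fun _ => (1:ℝ)) := by
      funext k
      simp [Set.indicator_apply]
    rw [h2, integral_indicator_const (1:ℝ) (measurableSet_singleton n), measureReal_def, hpois n,
      ENNReal.toReal_ofReal (hpn n), smul_eq_mul, mul_one]
  have hint : ∀ n, ∫ ω, f n ω ∂P = p n * gaux ν Δt n := by
    intro n
    have hIndep2 : IndepFun ((fun k : ℕ => if k = n then (1:ℝ) else 0) ∘ N)
        (Faux ν Δt n ∘ (fun ω => fun i => U i ω)) P :=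
      hindep.comp measurable_from_nat (Faux_meas ν Δt n)
    have h := hIndep2.integral_fun_mul_eq_mul_integral
      ((measurable_from_nat.comp_aemeasurable hNae)).aestronglyMeasurable
      (((Faux_meas ν Δt n).comp_aemeasurable hVae)).aestronglyMeasurable
    calc ∫ ω, f n ω ∂P
        = ∫ ω, ((fun k : ℕ => if k = n then (1:ℝ) else 0) ∘ N) ω
            * (Faux ν Δt n ∘ (fun ω => fun i => U i ω)) ω ∂P := rfl
      _ = (∫ ω, ((fun k : ℕ => if k = n then (1:ℝ) else 0) ∘ N) ω ∂P)
            * ∫ ω, (Faux ν Δt n ∘ (fun ω => fun i => U i ω)) ω ∂P := h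
      _ = p n * gaux ν Δt n := by
          rw [show (∫ ω, ((fun k : ℕ => if k = n then (1:ℝ) else 0) ∘ N) ω ∂P) = p n
            from hphi n]
          rw [show (∫ ω, (Faux ν Δt n ∘ (fun ω => fun i => U i ω)) ω ∂P)
            = gaux ν Δt n from Faux_integral hν hΔt hunif hiid n]
  -- the final sum
  have hfin : HasSum (fun n => p n * gaux ν Δt n)
      ((1 + 2 * (ν * Δt)) * 1 + (2 + ν * Δt / 2) * (r : ℝ)
        - (ν * Δt) * ((1 - Real.exp (-(r : ℝ))) / (r : ℝ))) := by
    have h := (((poissonPMFRealSum r : HasSum (fun n => poissonPMFReal r n) 1).mul_left (1 + 2 * (ν * Δt))).add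
      ((poisson_hasSum_id r).mul_left (2 + ν * Δt / 2))).sub
      ((poisson_hasSum_inv_succ r hrpos).mul_left (ν * Δt))
    have heq : (fun n : ℕ => (1 + 2 * (ν * Δt)) * poissonPMFReal r n
        + (2 + ν * Δt / 2) * ((n : ℝ) * poissonPMFReal r n)
        - (ν * Δt) * (poissonPMFReal r n / ((n : ℝ) + 1)))
        = fun n => p n * gaux ν Δt n := by
      funext n
      simp only [hpdef, gaux]
      ring
    exact heq ▸ h
  calc ∫ ω, C ω ∂P
      = ∫ ω, ∑' n, f n ω ∂P := integral_congr_ae (Filter.Eventually.of_forall hptw)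
    _ = ∑' n, ∫ ω, f n ω ∂P := integral_tsum hfae htop
    _ = ∑' n, p n * gaux ν Δt n := tsum_congr fun n => hint n
    _ = (1 + 2 * (ν * Δt)) * 1 + (2 + ν * Δt / 2) * (r : ℝ)
        - (ν * Δt) * ((1 - Real.exp (-(r : ℝ))) / (r : ℝ)) := hfin.tsum_eq
    _ = 1 + ν * Δt + (2 * lam + ν) * Δt + (lam * ν / 2) * Δt ^ 2
        + (ν / lam) * (Real.exp (-(lam * Δt)) - 1) := by
        rw [hrr]
        field_simp
        ring
end

section
/- Let λ > 0, ν > 0 and Δt > 0. Then the series Σ_{n=1}^{∞} (2n + νΔt + νΔt·(n−1)(n+2)/(2(n+1))) · ((λΔt)^n / n!) · e^{−λΔt} converges and equals (2λ + ν)Δt + (λν/2)Δt² + (ν/λ)(e^{−λΔt} − 1). -/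
open Real

lemma exp_hasSum (x : ℝ) : HasSum (fun n : ℕ => x ^ n / n.factorial) (Real.exp x) := by
  rw [Real.exp_eq_exp_ℝ]
  exact NormedSpace.expSeries_div_hasSum_exp x

/-- Poisson-weighted series computation in the proof of Theorem 1:
`Σ_{n=1}^∞ (2n + νΔt + νΔt·(n−1)(n+2)/(2(n+1))) ((λΔt)^n/n!) e^{−λΔt}
  = (2λ + ν)Δt + (λν/2)Δt² + (ν/λ)(e^{−λΔt} − 1)`.
The sum over `n ≥ 1` is encoded by summing the term at `n+1` over `n : ℕ`;
`HasSum` expresses both convergence and the value of the series. -/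
theorem stmt_2 (lam ν Δt : ℝ) (hlam : 0 < lam) (hν : 0 < ν) (hΔt : 0 < Δt) :
    HasSum
      (fun m : ℕ =>
        (2 * ((m + 1 : ℕ) : ℝ) + ν * Δt
            + ν * Δt * ((((m + 1 : ℕ) : ℝ) - 1) * (((m + 1 : ℕ) : ℝ) + 2)
                / (2 * (((m + 1 : ℕ) : ℝ) + 1))))
          * ((lam * Δt) ^ (m + 1) / ((m + 1).factorial : ℝ))
          * Real.exp (-(lam * Δt)))
      ((2 * lam + ν) * Δt + (lam * ν / 2) * Δt ^ 2
        + (ν / lam) * (Real.exp (-(lam * Δt)) - 1)) := by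
  set x : ℝ := lam * Δt with hx
  have hx0 : x ≠ 0 := by positivity
  have hA := exp_hasSum x
  -- S1 : Σ x^(m+1)/m! = x * e^x
  have hS1 : HasSum (fun m : ℕ => x ^ (m + 1) / m.factorial) (x * Real.exp x) := by
    have h := hA.mul_left x
    have heq : (fun m : ℕ => x ^ (m + 1) / m.factorial)
        = fun m : ℕ => x * (x ^ m / m.factorial) := by
      funext m; rw [pow_succ]; ring
    rw [heq]; exact h
  -- S2 : Σ x^(m+1)/(m+1)! = e^x - 1
  have hS2 : HasSum (fun m : ℕ => x ^ (m + 1) / (m + 1).factorial)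
      (Real.exp x - 1) := by
    refine (hasSum_nat_add_iff (f := fun n : ℕ => x ^ n / n.factorial) 1).mpr ?_
    simpa using hA
  -- S3 : Σ x^(m+2)/(m+2)! = e^x - 1 - x
  have hS3 : HasSum (fun m : ℕ => x ^ (m + 2) / (m + 2).factorial)
      (Real.exp x - 1 - x) := by
    refine (hasSum_nat_add_iff (f := fun n : ℕ => x ^ n / n.factorial) 2).mpr ?_
    have h2 : Real.exp x - 1 - x + ∑ i ∈ Finset.range 2, x ^ i / (i.factorial : ℝ)
        = Real.exp x := by
      simp [Finset.sum_range_succ]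
    rw [h2]; exact hA
  -- S4 : Σ x^(m+1)/(m+2)! = (e^x - 1 - x)/x
  have hS4 : HasSum (fun m : ℕ => x ^ (m + 1) / (m + 2).factorial)
      ((Real.exp x - 1 - x) / x) := by
    have h := hS3.mul_left (1 / x)
    have hv : 1 / x * (Real.exp x - 1 - x) = (Real.exp x - 1 - x) / x := by ring
    rw [hv] at h
    have heq : (fun m : ℕ => x ^ (m + 1) / (m + 2).factorial)
        = fun m : ℕ => 1 / x * (x ^ (m + 2) / (m + 2).factorial) := by
      funext m
      rw [pow_succ (n := m + 1)]
      field_simp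
    rw [heq]; exact h
  -- combine
  have H := (((hS1.mul_left (2 + ν * Δt / 2)).add (hS2.mul_left (ν * Δt))).sub
      (hS4.mul_left (ν * Δt))).mul_right (Real.exp (-x))
  have hfun : (fun m : ℕ =>
        (2 * ((m + 1 : ℕ) : ℝ) + ν * Δt
            + ν * Δt * ((((m + 1 : ℕ) : ℝ) - 1) * (((m + 1 : ℕ) : ℝ) + 2)
                / (2 * (((m + 1 : ℕ) : ℝ) + 1))))
          * ((lam * Δt) ^ (m + 1) / ((m + 1).factorial : ℝ))
          * Real.exp (-(lam * Δt)))
      = fun m : ℕ =>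
        ((2 + ν * Δt / 2) * (x ^ (m + 1) / m.factorial)
            + ν * Δt * (x ^ (m + 1) / (m + 1).factorial)
            - ν * Δt * (x ^ (m + 1) / (m + 2).factorial)) * Real.exp (-x) := by
    funext m
    rw [← hx]
    have hf1 : ((m + 1).factorial : ℝ) = (m + 1) * m.factorial := by
      rw [Nat.factorial_succ]; push_cast; ring
    have hf2 : ((m + 2).factorial : ℝ) = (m + 2) * ((m + 1) * m.factorial) := by
      rw [Nat.factorial_succ, Nat.factorial_succ]; push_cast; ring
    have hm0 : (m.factorial : ℝ) ≠ 0 := Nat.cast_ne_zero.mpr m.factorial_ne_zero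
    have hm1 : ((m : ℝ) + 1) ≠ 0 := by positivity
    have hm2 : ((m : ℝ) + 2) ≠ 0 := by positivity
    rw [hf1, hf2]
    push_cast
    field_simp
    ring
  have hval : ((2 + ν * Δt / 2) * (x * Real.exp x) + ν * Δt * (Real.exp x - 1)
        - ν * Δt * ((Real.exp x - 1 - x) / x)) * Real.exp (-x)
      = (2 * lam + ν) * Δt + (lam * ν / 2) * Δt ^ 2
        + (ν / lam) * (Real.exp (-(lam * Δt)) - 1) := by
    rw [← hx, Real.exp_neg]
    have he : Real.exp x ≠ 0 := Real.exp_ne_zero x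
    rw [hx]
    field_simp
    ring
  rw [hfun, ← hval]
  exact H
end
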